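/- Existence of normal forms: let A be a subalgebra of MvPolynomial σ k. For every polynomial f ∈ MvPolynomial σ k there exists a polynomial r such that f − r ∈ A and for every exponent vector d in the support of r, the monomial x^d does not lie in the initial algebra in_m(A). -/

import Mathlib

open MvPolynomial

noncomputable section

variable {σ : Type*} [Fintype σ] {k : Type*} [Field k]

/-- The degree (largest exponent vector) of a polynomial with respect to a monomial order. -/
def MonomialOrder.degree' (m : MonomialOrder σ) (f : MvPolynomial σ k) : σ →₀ ℕ :=
  m.toSyn.symm (f.support.sup fun d => m.toSyn d)

/-- The leading term of a polynomial with respect to a monomial order. -/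
def MonomialOrder.leadTerm (m : MonomialOrder σ) (f : MvPolynomial σ k) : MvPolynomial σ k :=
  monomial (m.degree' f) (f.coeff (m.degree' f))

/-- The initial algebra of a subalgebra `A`: the `k`-subalgebra generated by the leading
terms of the nonzero elements of `A`. -/
def MonomialOrder.initialAlgebra (m : MonomialOrder σ) (A : Subalgebra k (MvPolynomial σ k)) :
    Subalgebra k (MvPolynomial σ k) :=
  Algebra.adjoin k {p | ∃ a ∈ A, a ≠ 0 ∧ p = m.leadTerm a}

namespace NFAux

variable (m : MonomialOrder σ)

lemma toSyn_degree' (f : MvPolynomial σ k) :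
    m.toSyn (m.degree' f) = f.support.sup fun d => m.toSyn d := by
  simp [MonomialOrder.degree']

lemma le_degree' {f : MvPolynomial σ k} {d : σ →₀ ℕ} (hd : d ∈ f.support) :
    m.toSyn d ≤ m.toSyn (m.degree' f) := by
  rw [toSyn_degree']
  exact Finset.le_sup hd

lemma degree'_mem_support {f : MvPolynomial σ k} (hf : f ≠ 0) :
    m.degree' f ∈ f.support := by
  have h : f.support.Nonempty := MvPolynomial.support_nonempty.mpr hf
  obtain ⟨d, hd, hde⟩ := Finset.exists_mem_eq_sup f.support h (fun d => m.toSyn d)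
  have : m.degree' f = d := by
    rw [MonomialOrder.degree', hde]; exact m.toSyn.symm_apply_apply d
  rwa [this]

lemma coeff_degree'_ne_zero {f : MvPolynomial σ k} (hf : f ≠ 0) :
    f.coeff (m.degree' f) ≠ 0 := by
  simpa [MvPolynomial.mem_support_iff] using degree'_mem_support m hf

lemma degree'_lt_of {f : MvPolynomial σ k} {d : σ →₀ ℕ}
    (h0 : f.coeff d = 0)
    (hle : ∀ e ∈ f.support, m.toSyn e ≤ m.toSyn d) (hf : f ≠ 0) :
    m.toSyn (m.degree' f) < m.toSyn d := by
  have hlt : ∀ e ∈ f.support, m.toSyn e < m.toSyn d := by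
    intro e he
    refine lt_of_le_of_ne (hle e he) ?_
    intro hcon
    have : e = d := m.toSyn.injective hcon
    rw [MvPolynomial.mem_support_iff, this] at he
    exact he h0
  obtain ⟨e, he⟩ := MvPolynomial.support_nonempty.mpr hf
  have hbot : (⊥ : m.syn) < m.toSyn d := lt_of_le_of_lt bot_le (hlt e he)
  rw [toSyn_degree']
  exact (Finset.sup_lt_iff hbot).mpr hlt

set_option maxHeartbeats 1000000 in
lemma degree'_mul {f g : MvPolynomial σ k} (hf : f ≠ 0) (hg : g ≠ 0) :
    f * g ≠ 0 ∧ m.degree' (f * g) = m.degree' f + m.degree' g := by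
  classical
  set df := m.degree' f
  set dg := m.degree' g
  have hcoeff : (f * g).coeff (df + dg) = f.coeff df * g.coeff dg := by
    rw [MvPolynomial.coeff_mul]
    rw [Finset.sum_eq_single (df, dg)]
    · intro b hb hne
      simp only [Finset.HasAntidiagonal.mem_antidiagonal] at hb
      by_contra hc
      have hb1 : b.1 ∈ f.support := by
        rw [MvPolynomial.mem_support_iff]; intro h; apply hc; rw [h, zero_mul]
      have hb2 : b.2 ∈ g.support := by
        rw [MvPolynomial.mem_support_iff]; intro h; apply hc; rw [h, mul_zero]
      have h1 := le_degree' m hb1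
      have h2 := le_degree' m hb2
      have heq : m.toSyn b.1 + m.toSyn b.2 = m.toSyn df + m.toSyn dg := by
        rw [← map_add, ← map_add, hb]
      have hb1' : m.toSyn b.1 = m.toSyn df := le_antisymm h1 (by
        by_contra hlt
        push_neg at hlt
        have := add_lt_add_of_lt_of_le hlt h2
        rw [heq] at this
        exact lt_irrefl _ this)
      have hb2' : m.toSyn b.2 = m.toSyn dg := by
        have := heq
        rw [hb1'] at this
        exact add_left_cancel this
      apply hne
      exact Prod.ext (m.toSyn.injective hb1') (m.toSyn.injective hb2')
    · intro h
      simp only [Finset.HasAntidiagonal.mem_antidiagonal, not_true_eq_false] at h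
  have hne : (f * g).coeff (df + dg) ≠ 0 := by
    rw [hcoeff]
    exact mul_ne_zero (coeff_degree'_ne_zero m hf) (coeff_degree'_ne_zero m hg)
  have hfg : f * g ≠ 0 := fun h => hne (by rw [h]; simp)
  refine ⟨hfg, ?_⟩
  have hle : m.toSyn (m.degree' (f * g)) ≤ m.toSyn (df + dg) := by
    rw [toSyn_degree']
    apply Finset.sup_le
    intro e he
    rw [MvPolynomial.mem_support_iff, MvPolynomial.coeff_mul] at he
    obtain ⟨b, hb, hbne⟩ := Finset.exists_ne_zero_of_sum_ne_zero he
    simp only [Finset.HasAntidiagonal.mem_antidiagonal] at hb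
    have hb1 : b.1 ∈ f.support := by
      rw [MvPolynomial.mem_support_iff]; intro h; apply hbne; rw [h, zero_mul]
    have hb2 : b.2 ∈ g.support := by
      rw [MvPolynomial.mem_support_iff]; intro h; apply hbne; rw [h, mul_zero]
    calc m.toSyn e = m.toSyn b.1 + m.toSyn b.2 := by rw [← map_add, hb]
      _ ≤ m.toSyn df + m.toSyn dg := add_le_add (le_degree' m hb1) (le_degree' m hb2)
      _ = m.toSyn (df + dg) := (map_add _ _ _).symm
  have hge : m.toSyn (df + dg) ≤ m.toSyn (m.degree' (f * g)) :=
    le_degree' m (MvPolynomial.mem_support_iff.mpr hne)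
  exact m.toSyn.injective (le_antisymm hle hge)

lemma degree'_one : m.degree' (1 : MvPolynomial σ k) = 0 := by
  classical
  apply m.toSyn.injective
  rw [toSyn_degree', map_zero]
  apply le_antisymm
  · apply Finset.sup_le
    intro e he
    rw [MvPolynomial.mem_support_iff, MvPolynomial.coeff_one] at he
    have he0 : e = 0 := by
      by_contra hne
      exact he (if_neg fun h => hne h.symm)
    rw [he0, map_zero]
  · exact bot_le

variable (A : Subalgebra k (MvPolynomial σ k))

/-- Degrees of nonzero elements of `A` form an additive submonoid. -/
def degSubmonoid : AddSubmonoid (σ →₀ ℕ) where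
  carrier := {d | ∃ a ∈ A, a ≠ 0 ∧ m.degree' a = d}
  zero_mem' := ⟨1, A.one_mem, one_ne_zero, degree'_one m⟩
  add_mem' := by
    rintro d e ⟨a, ha, ha0, rfl⟩ ⟨b, hb, hb0, rfl⟩
    obtain ⟨hab0, habdeg⟩ := degree'_mul m ha0 hb0
    exact ⟨a * b, A.mul_mem ha hb, hab0, habdeg⟩

/-- Polynomials supported on the degree submonoid form a subalgebra. -/
def suppAlg : Subalgebra k (MvPolynomial σ k) where
  carrier := {p | ∀ e ∈ p.support, e ∈ degSubmonoid m A}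
  add_mem' := by
    classical
    intro p q hp hq e he
    rcases Finset.mem_union.mp (MvPolynomial.support_add he) with h | h
    · exact hp e h
    · exact hq e h
  mul_mem' := by
    classical
    intro p q hp hq e he
    have h2 := MvPolynomial.support_mul p q he
    rw [Finset.mem_add] at h2
    obtain ⟨a, ha, b, hb, rfl⟩ := h2
    exact (degSubmonoid m A).add_mem (hp a ha) (hq b hb)
  algebraMap_mem' := by
    classical
    intro c e he
    rw [MvPolynomial.algebraMap_eq, MvPolynomial.mem_support_iff, MvPolynomial.coeff_C] at he
    have he0 : e = 0 := by
      by_contra hne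
      exact he (if_neg fun h => hne h.symm)
    rw [he0]
    exact (degSubmonoid m A).zero_mem

lemma mem_suppAlg_iff (p : MvPolynomial σ k) :
    p ∈ suppAlg m A ↔ ∀ e ∈ p.support, e ∈ degSubmonoid m A := Iff.rfl

lemma mem_degSubmonoid_of_monomial_mem {d : σ →₀ ℕ}
    (h : (monomial d (1 : k)) ∈ m.initialAlgebra A) :
    ∃ a ∈ A, a ≠ 0 ∧ m.degree' a = d := by
  classical
  have hle : m.initialAlgebra A ≤ suppAlg m A := by
    rw [MonomialOrder.initialAlgebra]
    apply Algebra.adjoin_le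
    rintro p ⟨a, ha, ha0, rfl⟩
    rw [SetLike.mem_coe, mem_suppAlg_iff]
    intro e he
    rw [MonomialOrder.leadTerm] at he
    have h1 := MvPolynomial.support_monomial_subset he
    rw [Finset.mem_singleton] at h1
    rw [h1]
    exact ⟨a, ha, ha0, rfl⟩
  have h2 := (mem_suppAlg_iff m A _).mp (hle h)
  exact h2 d (by simp [MvPolynomial.support_monomial])

end NFAux

/-- Existence of normal forms. -/
theorem normalForm_exists (m : MonomialOrder σ) (A : Subalgebra k (MvPolynomial σ k))
    (f : MvPolynomial σ k) :
    ∃ r : MvPolynomial σ k, f - r ∈ A ∧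
      ∀ d ∈ r.support, (monomial d (1 : k)) ∉ m.initialAlgebra A := by
  have H : ∀ s : m.syn, ∀ f : MvPolynomial σ k, m.toSyn (m.degree' f) = s →
      ∃ r : MvPolynomial σ k, f - r ∈ A ∧
        ∀ d ∈ r.support, (monomial d (1 : k)) ∉ m.initialAlgebra A := by
    classical
    intro s
    induction s using WellFoundedLT.induction with
    | _ s IH =>
    intro f hfs
    by_cases hf0 : f = 0
    · exact ⟨0, by simpa [hf0] using A.zero_mem, by simp⟩
    set d := m.degree' f with hd
    set c := f.coeff d with hc
    have hcne : c ≠ 0 := NFAux.coeff_degree'_ne_zero m hf0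
    by_cases hmem : (monomial d (1 : k)) ∈ m.initialAlgebra A
    · -- reduce by an element of A
      obtain ⟨a, haA, ha0, hadeg⟩ := NFAux.mem_degSubmonoid_of_monomial_mem m A hmem
      set lc := a.coeff d with hlc
      have hlcne : lc ≠ 0 := by
        rw [hlc, ← hadeg]
        exact NFAux.coeff_degree'_ne_zero m ha0
      set g := MvPolynomial.C (c / lc) * a with hg
      have hgA : g ∈ A := A.mul_mem (A.algebraMap_mem _) haA
      set f' := f - g with hf'
      have hcoeff0 : f'.coeff d = 0 := by
        rw [hf']
        simp only [MvPolynomial.coeff_sub, hg, MvPolynomial.coeff_C_mul, ← hlc]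
        field_simp
        rw [hc, sub_self]
      have hle : ∀ e ∈ f'.support, m.toSyn e ≤ m.toSyn d := by
        intro e he
        rw [MvPolynomial.mem_support_iff, hf', MvPolynomial.coeff_sub] at he
        rcases ne_or_eq (f.coeff e) 0 with h | h
        · exact NFAux.le_degree' m (MvPolynomial.mem_support_iff.mpr h)
        · have : g.coeff e ≠ 0 := by
            intro h'; apply he; rw [h, h']; ring
          have hea : e ∈ a.support := by
            rw [MvPolynomial.mem_support_iff]
            intro h'
            apply this
            rw [hg, MvPolynomial.coeff_C_mul, h', mul_zero]
          have := NFAux.le_degree' m hea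
          rwa [hadeg] at this
      by_cases hf'0 : f' = 0
      · refine ⟨0, ?_, by simp⟩
        have : f = g := by rwa [hf', sub_eq_zero] at hf'0
        rw [sub_zero, this]; exact hgA
      · have hlt : m.toSyn (m.degree' f') < s := by
          rw [← hfs]
          exact NFAux.degree'_lt_of m hcoeff0 hle hf'0
        obtain ⟨r, hrA, hrsupp⟩ := IH _ hlt f' rfl
        refine ⟨r, ?_, hrsupp⟩
        have : f - r = (f' - r) + g := by rw [hf']; ring
        rw [this]
        exact A.add_mem hrA hgA
    · -- move the leading term into r
      set f' := f - monomial d c with hf'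
      have hcoeff0 : f'.coeff d = 0 := by
        rw [hf']
        rw [MvPolynomial.coeff_sub, MvPolynomial.coeff_monomial, if_pos rfl, hc, sub_self]
      have hle : ∀ e ∈ f'.support, m.toSyn e ≤ m.toSyn d := by
        intro e he
        rw [MvPolynomial.mem_support_iff, hf', MvPolynomial.coeff_sub] at he
        rcases ne_or_eq (f.coeff e) 0 with h | h
        · exact NFAux.le_degree' m (MvPolynomial.mem_support_iff.mpr h)
        · have : (monomial d c).coeff e ≠ 0 := by
            intro h'; apply he; rw [h, h']; ring
          rw [MvPolynomial.coeff_monomial] at this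
          by_cases hde : d = e
          · rw [← hde]
          · exact absurd (if_neg hde) this
      by_cases hf'0 : f' = 0
      · refine ⟨monomial d c, ?_, ?_⟩
        · rw [← hf', hf'0]; exact A.zero_mem
        · intro e he
          have : e = d := by
            simpa using MvPolynomial.support_monomial_subset he
          rwa [this]
      · have hlt : m.toSyn (m.degree' f') < s := by
          rw [← hfs]
          exact NFAux.degree'_lt_of m hcoeff0 hle hf'0
        obtain ⟨r', hrA, hrsupp⟩ := IH _ hlt f' rfl
        refine ⟨monomial d c + r', ?_, ?_⟩
        · have : f - (monomial d c + r') = f' - r' := by rw [hf']; ring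
          rw [this]; exact hrA
        · intro e he
          rw [MvPolynomial.mem_support_iff, MvPolynomial.coeff_add] at he
          rcases ne_or_eq (r'.coeff e) 0 with h | h
          · exact hrsupp e (MvPolynomial.mem_support_iff.mpr h)
          · have : (monomial d c).coeff e ≠ 0 := by
              intro h'; apply he; rw [h, h']; ring
            rw [MvPolynomial.coeff_monomial] at this
            by_cases hde : d = e
            · rwa [← hde]
            · exact absurd (if_neg hde) this
  exact H _ f rfl
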